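/- Let X be a finite set with |X| = m, and let S be a finite family of subsets of X, each of size exactly 3, such that every x ∈ X belongs to at least one s ∈ S. Let G be the graph on vertex set X ⊕ S ⊕ {r} with edges {r, s} for every s ∈ S, and {x, s} for every x ∈ X and s ∈ S with x ∈ s (and no other edges); let dG denote the shortest-path distance in G. Consider assignments E consisting of a vertex E₁(x) for each x ∈ X and a vertex E₂(s) for each s ∈ S such that every vertex in the image of E₁ is also in the image of E₂ (inclusion constraint A₁ ⊑ A₂), with cost(E) = ∑_{x∈X} dG(x, E₁(x)) + ∑_{s∈S} dG(r, E₂(s)). Then for every natural number p: there exists such an assignment E with cost(E) ≤ m + p if and only if there exists S' ⊆ S with ⋃S' = X and |S'| ≤ p. (Cost correspondence in the PTAS reduction from minimum set cover by 3-sets establishing APX-hardness of computing an optimal repair under the constraint A₁ ⊑ A₂.) -/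

import Mathlib

/-- Base relation of the set-cover graph: the root `r` is related to every set vertex
`s ∈ S`, and an element vertex `x` is related to a set vertex `s` iff `x ∈ s`. -/
def CoverRel {X : Type*} (S : Finset (Finset X)) :
    (X ⊕ {s : Finset X // s ∈ S} ⊕ Unit) →
      (X ⊕ {s : Finset X // s ∈ S} ⊕ Unit) → Prop
  | Sum.inr (Sum.inr _), Sum.inr (Sum.inl _) => True
  | Sum.inl x, Sum.inr (Sum.inl s) => x ∈ s.1
  | _, _ => False

/-- The set-cover graph on vertices `X ⊕ S ⊕ {r}` with edges `{r, s}` for `s ∈ S` and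
`{x, s}` for `x ∈ s`. -/
def CoverGraph {X : Type*} (S : Finset (Finset X)) :
    SimpleGraph (X ⊕ {s : Finset X // s ∈ S} ⊕ Unit) :=
  SimpleGraph.fromRel (CoverRel S)

section Aux

variable {X : Type*} {S : Finset (Finset X)}

lemma cg_not_adj_xx (x y : X) : ¬ (CoverGraph S).Adj (Sum.inl x) (Sum.inl y) := by
  simp [CoverGraph, SimpleGraph.fromRel_adj, CoverRel]

lemma cg_not_adj_xr (x : X) :
    ¬ (CoverGraph S).Adj (Sum.inl x) (Sum.inr (Sum.inr ())) := by
  simp [CoverGraph, SimpleGraph.fromRel_adj, CoverRel]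

lemma cg_adj_xs_iff (x : X) (s : {s : Finset X // s ∈ S}) :
    (CoverGraph S).Adj (Sum.inl x) (Sum.inr (Sum.inl s)) ↔ x ∈ s.1 := by
  simp [CoverGraph, SimpleGraph.fromRel_adj, CoverRel]

lemma cg_adj_rs (s : {s : Finset X // s ∈ S}) :
    (CoverGraph S).Adj (Sum.inr (Sum.inr ())) (Sum.inr (Sum.inl s)) := by
  simp [CoverGraph, SimpleGraph.fromRel_adj, CoverRel]

lemma cg_not_adj_rx (x : X) :
    ¬ (CoverGraph S).Adj (Sum.inr (Sum.inr ())) (Sum.inl x) := by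
  simp [CoverGraph, SimpleGraph.fromRel_adj, CoverRel]

lemma cg_not_adj_rr :
    ¬ (CoverGraph S).Adj (Sum.inr (Sum.inr ())) (Sum.inr (Sum.inr ())) :=
  (CoverGraph S).loopless.irrefl _

/-- every vertex is reachable from the root -/
lemma cg_reach (hcov : ∀ x : X, ∃ s ∈ S, x ∈ s)
    (v : X ⊕ {s : Finset X // s ∈ S} ⊕ Unit) :
    (CoverGraph S).Reachable v (Sum.inr (Sum.inr ())) := by
  match v with
  | Sum.inr (Sum.inr ()) => exact SimpleGraph.Reachable.refl _
  | Sum.inr (Sum.inl s) => exact (cg_adj_rs s).symm.reachable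
  | Sum.inl x =>
      obtain ⟨s, hs, hxs⟩ := hcov x
      exact (((cg_adj_xs_iff x ⟨s, hs⟩).mpr hxs).reachable).trans
        (cg_adj_rs ⟨s, hs⟩).symm.reachable

lemma cg_reach' (hcov : ∀ x : X, ∃ s ∈ S, x ∈ s)
    (u v : X ⊕ {s : Finset X // s ∈ S} ⊕ Unit) :
    (CoverGraph S).Reachable u v :=
  (cg_reach hcov u).trans (cg_reach hcov v).symm

lemma two_le_dist' {V : Type*} {G : SimpleGraph V} {u v : V}
    (hr : G.Reachable u v) (hne : u ≠ v) (hna : ¬ G.Adj u v) : 2 ≤ G.dist u v := by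
  have h0 : G.dist u v ≠ 0 := by
    intro h
    rcases SimpleGraph.dist_eq_zero_iff_eq_or_not_reachable.mp h with h' | h'
    exacts [hne h', h' hr]
  have h1 : G.dist u v ≠ 1 := fun h => hna (SimpleGraph.dist_eq_one_iff_adj.mp h)
  omega

lemma one_le_dist' {V : Type*} {G : SimpleGraph V} {u v : V}
    (hr : G.Reachable u v) (hne : u ≠ v) : 1 ≤ G.dist u v := by
  have h0 : G.dist u v ≠ 0 := by
    intro h
    rcases SimpleGraph.dist_eq_zero_iff_eq_or_not_reachable.mp h with h' | h'
    exacts [hne h', h' hr]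
  omega

lemma sum_image_le' {α β : Type*} [DecidableEq β] (s : Finset α) (f : α → β)
    (g : β → ℕ) : ∑ b ∈ s.image f, g b ≤ ∑ a ∈ s, g (f a) := by
  classical
  induction s using Finset.induction with
  | empty => simp
  | @insert a t ha ih =>
      rw [Finset.image_insert, Finset.sum_insert ha]
      by_cases hfa : f a ∈ t.image f
      · rw [Finset.insert_eq_self.mpr hfa]
        omega
      · rw [Finset.sum_insert hfa]
        omega

end Aux

/-- Cost correspondence in the PTAS reduction from minimum set cover by 3-sets: there
is an assignment `E = (E₁, E₂)` satisfying the inclusion constraint `A₁ ⊑ A₂` with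
total movement cost at most `m + p` iff `X` has a cover by at most `p` members of `S`. -/
theorem stmt_14 {X : Type*} [Fintype X] [DecidableEq X]
    (S : Finset (Finset X)) (hS3 : ∀ s ∈ S, s.card = 3)
    (hcov : ∀ x : X, ∃ s ∈ S, x ∈ s) (p : ℕ) :
    (∃ (E₁ : X → X ⊕ {s : Finset X // s ∈ S} ⊕ Unit)
       (E₂ : {s : Finset X // s ∈ S} → X ⊕ {s : Finset X // s ∈ S} ⊕ Unit),
      (∀ v, (∃ x, E₁ x = v) → ∃ s, E₂ s = v) ∧
      (∑ x : X, (CoverGraph S).dist (Sum.inl x) (E₁ x)) +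
        (∑ s : {s : Finset X // s ∈ S},
          (CoverGraph S).dist (Sum.inr (Sum.inr ())) (E₂ s)) ≤
        Fintype.card X + p) ↔
    (∃ S' ⊆ S, (∀ x : X, ∃ s ∈ S', x ∈ s) ∧ S'.card ≤ p) := by
  classical
  set G := CoverGraph S with hG
  set rt : X ⊕ {s : Finset X // s ∈ S} ⊕ Unit := Sum.inr (Sum.inr ()) with hrt
  constructor
  · rintro ⟨E₁, E₂, hinc, hcost⟩
    -- element vertices whose assignment is a set vertex containing them
    set PA : X → Prop :=
      fun x => ∃ s : {s : Finset X // s ∈ S}, E₁ x = Sum.inr (Sum.inl s) ∧ x ∈ s.1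
      with hPA
    set A : Finset X := Finset.univ.filter PA with hA
    set D0 : Finset X := Finset.univ.filter (fun x => E₁ x = Sum.inl x) with hD0
    set g : X → {s : Finset X // s ∈ S} :=
      fun x => if h : PA x then h.choose else ⟨(hcov x).choose, (hcov x).choose_spec.1⟩
      with hg
    have hgmem : ∀ x, x ∈ (g x).1 := by
      intro x
      by_cases h : PA x
      · simp only [hg, dif_pos h]; exact h.choose_spec.2
      · simp only [hg, dif_neg h]; exact (hcov x).choose_spec.2
    have hgA : ∀ x, PA x → E₁ x = Sum.inr (Sum.inl (g x)) := by
      intro x h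
      simp only [hg, dif_pos h]
      exact h.choose_spec.1
    set T : Finset {s : Finset X // s ∈ S} := A.image g with hT
    set S'sub : Finset {s : Finset X // s ∈ S} := Finset.univ.image g with hS'sub
    refine ⟨S'sub.image Subtype.val, ?_, ?_, ?_⟩
    · intro t ht
      obtain ⟨s, _, rfl⟩ := Finset.mem_image.mp ht
      exact s.2
    · intro x
      refine ⟨(g x).1, ?_, hgmem x⟩
      exact Finset.mem_image_of_mem _ (Finset.mem_image_of_mem _ (Finset.mem_univ x))
    -- cardinality bound
    have hcard1 : (S'sub.image Subtype.val).card ≤ S'sub.card := Finset.card_image_le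
    have hsplit : S'sub.card ≤ T.card + Aᶜ.card := by
      have : S'sub ⊆ T ∪ Aᶜ.image g := by
        rw [hS'sub, ← Finset.union_compl A, Finset.image_union]
      calc S'sub.card ≤ (T ∪ Aᶜ.image g).card := Finset.card_le_card this
        _ ≤ T.card + (Aᶜ.image g).card := Finset.card_union_le _ _
        _ ≤ T.card + Aᶜ.card := by
            have := Finset.card_image_le (s := Aᶜ) (f := g)
            omega
    have hAcompl : A.card + Aᶜ.card = Fintype.card X := Finset.card_add_card_compl A
    -- Claim 1
    have claim1 : 2 * Fintype.card X ≤
        (∑ x : X, G.dist (Sum.inl x) (E₁ x)) + A.card + 2 * D0.card := by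
      have hpt : ∀ x : X, 2 ≤ G.dist (Sum.inl x) (E₁ x) +
          (if x ∈ A then 1 else 0) + (if x ∈ D0 then 2 else 0) := by
        intro x
        by_cases hxD : x ∈ D0
        · simp [hxD]
        by_cases hxA : x ∈ A
        · have hPAx : PA x := (Finset.mem_filter.mp hxA).2
          have : G.dist (Sum.inl x) (E₁ x) = 1 := by
            rw [hgA x hPAx]
            exact SimpleGraph.dist_eq_one_iff_adj.mpr
              ((cg_adj_xs_iff x (g x)).mpr (hgmem x))
          simp [hxA, this, hxD]
        · -- cost at least 2
          have h2 : 2 ≤ G.dist (Sum.inl x) (E₁ x) := by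
            have hreach : G.Reachable (Sum.inl x) (E₁ x) := cg_reach' hcov _ _
            rcases hE : E₁ x with y | s | u
            · have hne : y ≠ x := fun h => hxD (Finset.mem_filter.mpr
                ⟨Finset.mem_univ x, by rw [hE, h]⟩)
              rw [hE] at hreach
              exact two_le_dist' hreach (by simp [Ne, hne.symm]) (cg_not_adj_xx x y)
            · have hns : x ∉ s.1 := by
                intro h
                exact hxA (Finset.mem_filter.mpr ⟨Finset.mem_univ x, ⟨s, hE, h⟩⟩)
              rw [hE] at hreach
              exact two_le_dist' hreach (by simp)
                (fun h => hns ((cg_adj_xs_iff x s).mp h))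
            · cases u
              rw [hE] at hreach
              exact two_le_dist' hreach (by simp) (cg_not_adj_xr x)
          omega
      calc 2 * Fintype.card X = ∑ _x : X, 2 := by
            simp [Finset.sum_const, Finset.card_univ, Nat.mul_comm]
        _ ≤ ∑ x : X, (G.dist (Sum.inl x) (E₁ x) +
              (if x ∈ A then 1 else 0) + (if x ∈ D0 then 2 else 0)) :=
            Finset.sum_le_sum (fun x _ => hpt x)
        _ = (∑ x : X, G.dist (Sum.inl x) (E₁ x)) + A.card + 2 * D0.card := by
            rw [Finset.sum_add_distrib, Finset.sum_add_distrib]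
            congr 1
            · congr 1
              rw [Finset.sum_ite_mem, Finset.univ_inter, Finset.sum_const, smul_eq_mul,
                mul_one]
            · rw [Finset.sum_ite_mem, Finset.univ_inter, Finset.sum_const, smul_eq_mul,
                Nat.mul_comm]
    -- Claim 2
    set Tverts : Finset (X ⊕ {s : Finset X // s ∈ S} ⊕ Unit) :=
      T.image (fun s => Sum.inr (Sum.inl s)) with hTverts
    set U0 : Finset (X ⊕ {s : Finset X // s ∈ S} ⊕ Unit) :=
      D0.image Sum.inl with hU0
    have hdisj : Disjoint Tverts U0 := by
      rw [Finset.disjoint_left]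
      rintro v hv hv'
      obtain ⟨s, _, rfl⟩ := Finset.mem_image.mp hv
      obtain ⟨x, _, h⟩ := Finset.mem_image.mp hv'
      exact absurd h (by simp)
    have hTcard : Tverts.card = T.card :=
      Finset.card_image_of_injective _ (fun a b h => by simpa using h)
    have hU0card : U0.card = D0.card :=
      Finset.card_image_of_injective _ (fun a b h => by simpa using h)
    have claim2 : T.card + 2 * D0.card ≤ ∑ s : {s : Finset X // s ∈ S}, G.dist rt (E₂ s) := by
      have step1 : T.card + 2 * D0.card ≤ ∑ v ∈ Tverts ∪ U0, G.dist rt v := by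
        rw [Finset.sum_union hdisj]
        have h1 : T.card ≤ ∑ v ∈ Tverts, G.dist rt v := by
          calc T.card = ∑ _v ∈ Tverts, 1 := by simp [hTcard]
            _ ≤ _ := Finset.sum_le_sum (by
                intro v hv
                obtain ⟨s, _, rfl⟩ := Finset.mem_image.mp hv
                exact one_le_dist' (cg_reach' hcov _ _) (by simp [hrt]))
        have h2 : 2 * D0.card ≤ ∑ v ∈ U0, G.dist rt v := by
          calc 2 * D0.card = ∑ _v ∈ U0, 2 := by
                simp [hU0card, Finset.sum_const, Nat.mul_comm]
            _ ≤ _ := Finset.sum_le_sum (by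
                intro v hv
                obtain ⟨x, _, rfl⟩ := Finset.mem_image.mp hv
                exact two_le_dist' (cg_reach' hcov _ _) (by simp [hrt])
                  (cg_not_adj_rx x))
        omega
      have hFim : ∀ v ∈ Tverts ∪ U0, ∃ x : X, E₁ x = v := by
        intro v hv
        rcases Finset.mem_union.mp hv with hv | hv
        · obtain ⟨s, hs, rfl⟩ := Finset.mem_image.mp hv
          obtain ⟨x, hx, rfl⟩ := Finset.mem_image.mp hs
          exact ⟨x, hgA x (Finset.mem_filter.mp hx).2⟩
        · obtain ⟨x, hx, rfl⟩ := Finset.mem_image.mp hv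
          exact ⟨x, (Finset.mem_filter.mp hx).2⟩
      set W : Finset {s : Finset X // s ∈ S} :=
        Finset.univ.filter (fun s => E₂ s ∈ Tverts ∪ U0) with hW
      have hsub : Tverts ∪ U0 ⊆ W.image E₂ := by
        intro v hv
        obtain ⟨s, hs⟩ := hinc v (hFim v hv)
        refine Finset.mem_image.mpr ⟨s, ?_, hs⟩
        rw [hW, Finset.mem_filter]
        exact ⟨Finset.mem_univ s, hs ▸ hv⟩
      calc T.card + 2 * D0.card ≤ ∑ v ∈ Tverts ∪ U0, G.dist rt v := step1
        _ ≤ ∑ v ∈ W.image E₂, G.dist rt v := Finset.sum_le_sum_of_subset hsub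
        _ ≤ ∑ s ∈ W, G.dist rt (E₂ s) := sum_image_le' W E₂ _
        _ ≤ ∑ s : {s : Finset X // s ∈ S}, G.dist rt (E₂ s) :=
            Finset.sum_le_sum_of_subset (Finset.subset_univ W)
    omega
  · rintro ⟨S', hS'S, hc, hcard⟩
    set σ : X → {s : Finset X // s ∈ S} :=
      fun x => ⟨(hc x).choose, hS'S (hc x).choose_spec.1⟩ with hσ
    have hσS' : ∀ x, (σ x).1 ∈ S' := fun x => (hc x).choose_spec.1
    have hσmem : ∀ x, x ∈ (σ x).1 := fun x => (hc x).choose_spec.2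
    refine ⟨fun x => Sum.inr (Sum.inl (σ x)),
      fun s => if s.1 ∈ S' then Sum.inr (Sum.inl s) else rt, ?_, ?_⟩
    · rintro v ⟨x, rfl⟩
      exact ⟨σ x, by simp [hσS' x]⟩
    · have h1 : (∑ x : X, G.dist (Sum.inl x) (Sum.inr (Sum.inl (σ x)))) ≤
          Fintype.card X := by
        calc _ ≤ ∑ _x : X, 1 := Finset.sum_le_sum (fun x _ => by
              have : G.dist (Sum.inl x) (Sum.inr (Sum.inl (σ x))) = 1 :=
                SimpleGraph.dist_eq_one_iff_adj.mpr
                  ((cg_adj_xs_iff x (σ x)).mpr (hσmem x))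
              omega)
          _ = Fintype.card X := by simp
      have h2 : (∑ s : {s : Finset X // s ∈ S},
          G.dist rt (if s.1 ∈ S' then Sum.inr (Sum.inl s) else rt)) ≤ p := by
        calc _ ≤ ∑ s : {s : Finset X // s ∈ S}, (if s.1 ∈ S' then 1 else 0) := by
              refine Finset.sum_le_sum (fun s _ => ?_)
              by_cases h : s.1 ∈ S'
              · simp only [if_pos h]
                have : G.dist rt (Sum.inr (Sum.inl s)) = 1 :=
                  SimpleGraph.dist_eq_one_iff_adj.mpr (cg_adj_rs s)
                omega
              · simp [if_neg h, SimpleGraph.dist_self]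
          _ = (Finset.univ.filter (fun s : {s : Finset X // s ∈ S} => s.1 ∈ S')).card := by
              simp [Finset.sum_ite_mem, Finset.filter_mem_eq_inter]
          _ ≤ S'.card := by
              apply Finset.card_le_card_of_injOn Subtype.val
              · intro s hs
                exact (Finset.mem_filter.mp hs).2
              · intro a _ b _ h
                exact Subtype.ext h
          _ ≤ p := hcard
      exact Nat.add_le_add h1 h2
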